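/- If f : X → [0,∞) has a closed graph and A ⊆ X, then the restriction of f to Cl(A) is continuous at every point of A^f_0. -/

import Mathlib

/-- `AInf f A` is the set `A^f_∞`. -/
def AInf {X : Type*} [TopologicalSpace X] (f : X → ℝ) (A : Set X) : Set X :=
  {x ∈ closure A | ∀ M > (0 : ℝ), ∀ U : Set X, IsOpen U → x ∈ U → ∃ y ∈ U ∩ A, f y > M}

/-- `AZero f A` is the set `A^f_0`. -/
def AZero {X : Type*} [TopologicalSpace X] (f : X → ℝ) (A : Set X) : Set X :=
  closure A \ AInf f A


open Filter Topology Set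


/-- If the graph of `f` is closed, a cluster value of `f` along a filter converging to `x`
equals `f x`. -/
lemma cluster_eq_of_closedGraph {X : Type*} [TopologicalSpace X] {f : X → ℝ}
    (hclosed : IsClosed {p : X × ℝ | p.2 = f p.1})
    {G : Filter X} [G.NeBot] {x : X} {t : ℝ}
    (hG : G ≤ 𝓝 x) (ht : ClusterPt t (Filter.map f G)) : t = f x := by
  set H : Filter X := G ⊓ Filter.comap f (𝓝 t) with hH
  have hne : H.NeBot := by
    rw [← Filter.map_neBot_iff f]
    rw [Filter.push_pull]
    exact ht.neBot.mono (inf_comm _ _).le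
  have h1 : Tendsto f H (𝓝 t) := tendsto_iff_comap.mpr inf_le_right
  have h2 : Tendsto (fun y => (y, f y)) H (𝓝 (x, t)) :=
    (tendsto_id.mono_left (inf_le_left.trans hG)).prodMk_nhds h1
  exact hclosed.mem_of_tendsto h2 (Filter.Eventually.of_forall fun y => rfl)

theorem restriction_continuous_on_aZero
    {X : Type*} [TopologicalSpace X] (f : X → ℝ) (hnonneg : ∀ x, 0 ≤ f x)
    (hclosed : IsClosed {p : X × ℝ | p.2 = f p.1}) (A : Set X) :
    ∀ x ∈ AZero f A, ContinuousWithinAt f (closure A) x := by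
  intro x hx
  obtain ⟨hxcl, hninf⟩ := hx
  have hninf' : ¬ ∀ M > (0 : ℝ), ∀ U : Set X, IsOpen U → x ∈ U → ∃ y ∈ U ∩ A, f y > M := by
    intro h; exact hninf ⟨hxcl, h⟩
  push_neg at hninf'
  obtain ⟨M, hM, U, hUopen, hxU, hbound⟩ := hninf'
  -- Step 1: f ≤ M on U ∩ closure A
  have key : ∀ x' ∈ U ∩ closure A, f x' ∈ Set.Icc 0 M := by
    intro x' hx'
    refine ⟨hnonneg x', ?_⟩
    have hxcl' : x' ∈ closure (U ∩ A) := hUopen.inter_closure hx'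
    have hne : (𝓝[U ∩ A] x').NeBot := mem_closure_iff_nhdsWithin_neBot.mp hxcl'
    have hle : Filter.map f (𝓝[U ∩ A] x') ≤ 𝓟 (Set.Icc 0 M) := by
      rw [Filter.le_principal_iff, Filter.mem_map]
      filter_upwards [self_mem_nhdsWithin] with y hy
      exact ⟨hnonneg y, hbound y hy⟩
    obtain ⟨t, htIcc, ht⟩ := isCompact_Icc.exists_clusterPt hle
    have := cluster_eq_of_closedGraph hclosed (nhdsWithin_le_nhds) ht
    rw [this] at htIcc
    exact htIcc.2
  -- Step 2: continuity
  have hrestrict : 𝓝[closure A] x = 𝓝[U ∩ closure A] x := by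
    rw [Set.inter_comm]
    exact nhdsWithin_restrict' _ (hUopen.mem_nhds hxU)
  rw [ContinuousWithinAt, hrestrict]
  by_contra hcont
  rw [Metric.tendsto_nhds] at hcont
  push_neg at hcont
  obtain ⟨ε, hε, hfreq⟩ := hcont
  replace hfreq : ∃ᶠ y in 𝓝[U ∩ closure A] x, ¬ dist (f y) (f x) < ε :=
    hfreq.mono fun y hy => not_lt.mpr hy
  have hFne : (𝓝[U ∩ closure A] x ⊓ 𝓟 {y | ¬ dist (f y) (f x) < ε}).NeBot :=
    Filter.frequently_iff_neBot.mp hfreq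
  set F := 𝓝[U ∩ closure A] x ⊓ 𝓟 {y | ¬ dist (f y) (f x) < ε} with hF
  have hle : Filter.map f F ≤ 𝓟 (Set.Icc 0 M) := by
    rw [Filter.le_principal_iff, Filter.mem_map]
    have : ∀ᶠ y in F, y ∈ U ∩ closure A := Filter.le_def.mp inf_le_left _ self_mem_nhdsWithin
    filter_upwards [this] with y hy
    exact key y hy
  obtain ⟨t, htIcc, ht⟩ := isCompact_Icc.exists_clusterPt hle
  have hFx : F ≤ 𝓝 x := inf_le_left.trans nhdsWithin_le_nhds
  have htfx : t = f x := cluster_eq_of_closedGraph hclosed hFx ht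
  -- derive contradiction: ε ≤ dist t (f x) = 0
  set H : Filter X := F ⊓ Filter.comap f (𝓝 t) with hH
  have hne : H.NeBot := by
    rw [← Filter.map_neBot_iff f, Filter.push_pull]
    exact ht.neBot.mono (inf_comm _ _).le
  have h1 : Tendsto f H (𝓝 t) := tendsto_iff_comap.mpr inf_le_right
  have hev : ∀ᶠ y in H, ε ≤ dist (f y) (f x) := by
    have hm : {y | ¬ dist (f y) (f x) < ε} ∈ H :=
      Filter.le_def.mp (inf_le_left.trans inf_le_right) _ (Filter.mem_principal_self _)
    filter_upwards [hm] with y hy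
    exact not_lt.mp hy
  have : ε ≤ dist t (f x) := ge_of_tendsto (h1.dist tendsto_const_nhds) hev
  rw [htfx, dist_self] at this
  linarith
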